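/- Let d ≥ 2 and k ≥ 2 with k = ds + b, 0 ≤ b ≤ d−1, and let ℓ_1, ..., ℓ_d be nonnegative integers summing to k with each ℓ_i ∈ {s, s+1}. Then for all nonnegative reals x_1, ..., x_d with ∑ x_i = 1 and ∑ x_i^k < 1: (1/(1 − ∑_{i=1}^d x_i^k)) · (1/d!) · ∑_{π ∈ S_d} ∏_{j=1}^d x_j^{ℓ_{π(j)}} ≤ 1/(d^k − d), with equality when x_1 = ··· = x_d = 1/d. -/

import Mathlib

open Finset

lemma core_ineq (y z : ℝ) (hy : 0 ≤ y) (hz : 0 ≤ z) (a e : ℕ) (h : e + 2 ≤ a) :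
    y ^ (a-1) * z ^ (e+1) + y ^ (e+1) * z ^ (a-1) ≤ y ^ a * z ^ e + y ^ e * z ^ a := by
  obtain ⟨m, rfl⟩ : ∃ m, a = e + 2 + m := ⟨a - (e+2), by omega⟩
  have h1 : e + 2 + m - 1 = e + 1 + m := by omega
  rw [h1]
  have key : 0 ≤ (y ^ (m+1) - z ^ (m+1)) * (y - z) := by
    rcases le_total z y with hzy | hzy
    · exact mul_nonneg (sub_nonneg.2 (pow_le_pow_left₀ hz hzy _)) (sub_nonneg.2 hzy)
    · exact mul_nonneg_of_nonpos_of_nonpos (sub_nonpos.2 (pow_le_pow_left₀ hy hzy _)) (sub_nonpos.2 hzy)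
  have hn : 0 ≤ y ^ e * z ^ e * ((y ^ (m+1) - z ^ (m+1)) * (y - z)) :=
    mul_nonneg (mul_nonneg (pow_nonneg hy e) (pow_nonneg hz e)) key
  have hid : y ^ (e+2+m) * z ^ e + y ^ e * z ^ (e+2+m)
      - (y ^ (e+1+m) * z ^ (e+1) + y ^ (e+1) * z ^ (e+1+m))
      = y ^ e * z ^ e * ((y ^ (m+1) - z ^ (m+1)) * (y - z)) := by ring
  linarith

noncomputable def Fsym (d : ℕ) (x : Fin d → ℝ) (c : Fin d → ℕ) : ℝ :=
  ∑ π : Equiv.Perm (Fin d), ∏ j, x (π j) ^ c j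

lemma split_sum {M : Type*} [AddCommMonoid M] {d : ℕ} (u v : Fin d) (huv : u ≠ v)
    (g : Fin d → M) :
    ∑ j, g j = g u + (g v + ∑ j ∈ (univ.erase u).erase v, g j) := by
  rw [Finset.add_sum_erase _ g (Finset.mem_erase.2 ⟨huv.symm, mem_univ v⟩),
    Finset.add_sum_erase _ g (mem_univ u)]

lemma split_prod {d : ℕ} (u v : Fin d) (huv : u ≠ v) (g : Fin d → ℝ) :
    ∏ j, g j = g u * (g v * ∏ j ∈ (univ.erase u).erase v, g j) := by
  rw [Finset.mul_prod_erase _ g (Finset.mem_erase.2 ⟨huv.symm, mem_univ v⟩),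
    Finset.mul_prod_erase _ g (mem_univ u)]

lemma Fsym_eq (d : ℕ) (x : Fin d → ℝ) (c : Fin d → ℕ) :
    Fsym d x c = ∑ π : Equiv.Perm (Fin d), ∏ j, x j ^ c (π j) := by
  apply Fintype.sum_equiv (Equiv.inv (Equiv.Perm (Fin d)))
  intro π
  calc ∏ j, x (π j) ^ c j = ∏ j, x (π j) ^ c (π⁻¹ (π j)) := by simp
  _ = ∏ j, x j ^ c (π⁻¹ j) := Equiv.prod_comp π (fun j => x j ^ c (π⁻¹ j))
  _ = _ := rfl

lemma Fsym_comp (d : ℕ) (x : Fin d → ℝ) (c : Fin d → ℕ) (σ : Equiv.Perm (Fin d)) :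
    Fsym d x (c ∘ σ) = Fsym d x c := by
  have h1 : ∀ π : Equiv.Perm (Fin d),
      ∏ j, x (π j) ^ (c ∘ σ) j = ∏ j, x ((π * σ⁻¹) j) ^ c j := by
    intro π
    calc ∏ j, x (π j) ^ c (σ j) = ∏ j, x (π (σ⁻¹ (σ j))) ^ c (σ j) := by simp
    _ = ∏ j, x (π (σ⁻¹ j)) ^ c j := Equiv.prod_comp σ (fun j => x (π (σ⁻¹ j)) ^ c j)
    _ = _ := rfl
  unfold Fsym
  rw [Finset.sum_congr rfl (fun π _ => h1 π)]
  exact Fintype.sum_equiv (Equiv.mulRight σ⁻¹) _ _ (fun π => rfl)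

lemma Fsym_swap (d : ℕ) (x : Fin d → ℝ) (cc : Fin d → ℕ) (u v : Fin d) :
    Fsym d x cc = ∑ π : Equiv.Perm (Fin d), ∏ j, x ((π * Equiv.swap u v) j) ^ cc j :=
  (Fintype.sum_equiv (Equiv.mulRight (Equiv.swap u v)) _ _ (fun π => rfl)).symm

lemma transfer (d : ℕ) (x : Fin d → ℝ) (hx : ∀ i, 0 ≤ x i) (c : Fin d → ℕ)
    (u v : Fin d) (huv : u ≠ v) (h : c v + 2 ≤ c u) :
    Fsym d x (Function.update (Function.update c u (c u - 1)) v (c v + 1)) ≤ Fsym d x c := by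
  set c' := Function.update (Function.update c u (c u - 1)) v (c v + 1) with hc'
  have hc'u : c' u = c u - 1 := by
    rw [hc', Function.update_of_ne huv, Function.update_self]
  have hc'v : c' v = c v + 1 := by rw [hc', Function.update_self]
  have hc'j : ∀ j, j ≠ u → j ≠ v → c' j = c j := by
    intro j hju hjv
    rw [hc', Function.update_of_ne hjv, Function.update_of_ne hju]
  have key : ∀ π : Equiv.Perm (Fin d),
      (∏ j, x (π j) ^ c' j) + (∏ j, x ((π * Equiv.swap u v) j) ^ c' j)
      ≤ (∏ j, x (π j) ^ c j) + (∏ j, x ((π * Equiv.swap u v) j) ^ c j) := by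
    intro π
    set y := x (π u) with hy
    set z := x (π v) with hz
    set R := ∏ j ∈ (univ.erase u).erase v, x (π j) ^ c j with hR
    have hswapj : ∀ j, j ≠ u → j ≠ v → (π * Equiv.swap u v) j = π j := by
      intro j hju hjv
      rw [Equiv.Perm.mul_apply, Equiv.swap_apply_of_ne_of_ne hju hjv]
    have e1 : (∏ j, x (π j) ^ c j) = y ^ c u * (z ^ c v * R) :=
      split_prod u v huv _
    have e2 : (∏ j, x ((π * Equiv.swap u v) j) ^ c j) = z ^ c u * (y ^ c v * R) := by
      rw [split_prod u v huv]
      have : ∀ j ∈ (univ.erase u).erase v, x ((π * Equiv.swap u v) j) ^ c j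
          = x (π j) ^ c j := by
        intro j hj
        rw [hswapj j (Finset.mem_erase.1 (Finset.mem_erase.1 hj).2).1 (Finset.mem_erase.1 hj).1]
      rw [Finset.prod_congr rfl this]
      simp [Equiv.Perm.mul_apply]
      rfl
    have e3 : (∏ j, x (π j) ^ c' j) = y ^ (c u - 1) * (z ^ (c v + 1) * R) := by
      rw [split_prod u v huv]
      have : ∀ j ∈ (univ.erase u).erase v, x (π j) ^ c' j = x (π j) ^ c j := by
        intro j hj
        rw [hc'j j (Finset.mem_erase.1 (Finset.mem_erase.1 hj).2).1 (Finset.mem_erase.1 hj).1]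
      rw [Finset.prod_congr rfl this, hc'u, hc'v]
    have e4 : (∏ j, x ((π * Equiv.swap u v) j) ^ c' j)
        = z ^ (c u - 1) * (y ^ (c v + 1) * R) := by
      rw [split_prod u v huv]
      have : ∀ j ∈ (univ.erase u).erase v, x ((π * Equiv.swap u v) j) ^ c' j
          = x (π j) ^ c j := by
        intro j hj
        rw [hswapj j (Finset.mem_erase.1 (Finset.mem_erase.1 hj).2).1 (Finset.mem_erase.1 hj).1,
          hc'j j (Finset.mem_erase.1 (Finset.mem_erase.1 hj).2).1 (Finset.mem_erase.1 hj).1]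
      rw [Finset.prod_congr rfl this, hc'u, hc'v]
      simp [Equiv.Perm.mul_apply]
      rfl
    rw [e1, e2, e3, e4]
    have hRpos : 0 ≤ R := Finset.prod_nonneg (fun j _ => pow_nonneg (hx _) _)
    have hcore := core_ineq y z (hx _) (hx _) (c u) (c v) h
    have := mul_le_mul_of_nonneg_right hcore hRpos
    linarith [this]
  have s1 := Fsym_swap d x c u v
  have s2 := Fsym_swap d x c' u v
  have bigsum := Finset.sum_le_sum (fun π (_ : π ∈ univ) => key π)
  rw [Finset.sum_add_distrib, Finset.sum_add_distrib] at bigsum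
  unfold Fsym at *
  linarith [bigsum]

lemma sum_binary {d : ℕ} (g : Fin d → ℕ) (s : ℕ) (hg : ∀ i, g i = s ∨ g i = s+1) :
    ∑ i, g i = d * s + (univ.filter (fun i => g i = s+1)).card := by
  have h1 : ∀ i, g i = s + (if g i = s+1 then 1 else 0) := by
    intro i
    rcases hg i with h | h <;> simp [h]
  rw [Finset.sum_congr rfl (fun i _ => h1 i), Finset.sum_add_distrib, Finset.sum_const,
    card_univ, Fintype.card_fin, smul_eq_mul]
  congr 1
  exact (Finset.card_filter _ _).symm

lemma muirhead {d : ℕ} (hd : 0 < d) (s bb : ℕ) (hbb : bb < d) (x : Fin d → ℝ)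
    (hx : ∀ i, 0 ≤ x i)
    (ℓ : Fin d → ℕ) (hℓ : ∀ i, ℓ i = s ∨ ℓ i = s + 1) (hℓsum : ∑ i, ℓ i = d * s + bb) :
    ∀ (c : Fin d → ℕ), (∑ i, c i = d * s + bb) → Fsym d x ℓ ≤ Fsym d x c := by
  classical
  suffices H : ∀ n (c : Fin d → ℕ), (∑ i, c i * c i) ≤ n → ∑ i, c i = d*s+bb →
      Fsym d x ℓ ≤ Fsym d x c by
    intro c hc; exact H _ c le_rfl hc
  intro n
  induction n using Nat.strong_induction_on with
  | _ n IH =>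
  intro c hcn hsum
  by_cases hex : ∃ u v, c v + 2 ≤ c u
  · obtain ⟨u, v, huv2⟩ := hex
    have huv : u ≠ v := by rintro rfl; omega
    set c' := Function.update (Function.update c u (c u - 1)) v (c v + 1) with hc'
    have hc'u : c' u = c u - 1 := by
      rw [hc', Function.update_of_ne huv, Function.update_self]
    have hc'v : c' v = c v + 1 := by rw [hc', Function.update_self]
    have hc'j : ∀ j, j ≠ u → j ≠ v → c' j = c j := by
      intro j hju hjv
      rw [hc', Function.update_of_ne hjv, Function.update_of_ne hju]
    have hrest : ∀ j ∈ (univ.erase u).erase v, c' j = c j := fun j hj =>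
      hc'j j (Finset.mem_erase.1 (Finset.mem_erase.1 hj).2).1 (Finset.mem_erase.1 hj).1
    have hs3 : ∑ j ∈ (univ.erase u).erase v, c' j = ∑ j ∈ (univ.erase u).erase v, c j :=
      Finset.sum_congr rfl hrest
    have hsum' : ∑ i, c' i = d*s+bb := by
      have hs1 : ∑ i, c' i = c' u + (c' v + ∑ j ∈ (univ.erase u).erase v, c' j) :=
        split_sum u v huv c'
      have hs2 : ∑ i, c i = c u + (c v + ∑ j ∈ (univ.erase u).erase v, c j) :=
        split_sum u v huv c
      rw [hs2] at hsum
      omega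
    have hmeas : ∑ i, c' i * c' i < ∑ i, c i * c i := by
      have hq1 : ∑ i, c' i * c' i
          = c' u * c' u + (c' v * c' v + ∑ j ∈ (univ.erase u).erase v, c' j * c' j) :=
        split_sum u v huv (fun i => c' i * c' i)
      have hq2 : ∑ i, c i * c i
          = c u * c u + (c v * c v + ∑ j ∈ (univ.erase u).erase v, c j * c j) :=
        split_sum u v huv (fun i => c i * c i)
      have hq3 : ∑ j ∈ (univ.erase u).erase v, c' j * c' j
          = ∑ j ∈ (univ.erase u).erase v, c j * c j :=
        Finset.sum_congr rfl (fun j hj => by rw [hrest j hj])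
      have hlt : c' u * c' u + c' v * c' v < c u * c u + c v * c v := by
        rw [hc'u, hc'v]
        obtain ⟨t, ht⟩ : ∃ t, c u = c v + 2 + t := ⟨c u - (c v + 2), by omega⟩
        rw [ht]
        have h9 : c v + 2 + t - 1 = c v + 1 + t := by omega
        rw [h9]
        nlinarith
      linarith [hq1, hq2, hq3, hlt]
    exact le_trans (IH (∑ i, c' i * c' i) (lt_of_lt_of_le hmeas hcn) c' le_rfl hsum')
      (transfer d x hx c u v huv huv2)
  · push_neg at hex
    obtain ⟨i₀, -, hi₀⟩ := Finset.exists_min_image univ c ⟨⟨0, hd⟩, mem_univ _⟩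
    have hall : ∀ i, c i = c i₀ ∨ c i = c i₀ + 1 := by
      intro i
      have h1 := hi₀ i (mem_univ i)
      have h2 := hex i i₀
      omega
    have hsum_c := sum_binary c (c i₀) hall
    have hb''lt : (univ.filter (fun i => c i = c i₀ + 1)).card < d := by
      have hsub : (univ.filter (fun i => c i = c i₀ + 1)) ⊆ univ.erase i₀ := by
        intro i hi
        rw [Finset.mem_erase]
        refine ⟨?_, mem_univ i⟩
        intro hii
        have := (Finset.mem_filter.1 hi).2
        rw [hii] at this
        omega
      have := Finset.card_le_card hsub
      rw [Finset.card_erase_of_mem (mem_univ i₀), card_univ, Fintype.card_fin] at this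
      omega
    have heq : d * c i₀ + (univ.filter (fun i => c i = c i₀ + 1)).card = d * s + bb := by
      rw [← hsum_c, hsum]
    have hmod1 : (d * c i₀ + (univ.filter (fun i => c i = c i₀ + 1)).card) % d
        = (univ.filter (fun i => c i = c i₀ + 1)).card := by
      rw [Nat.mul_add_mod]; exact Nat.mod_eq_of_lt hb''lt
    have hmod2 : (d * s + bb) % d = bb := by
      rw [Nat.mul_add_mod]; exact Nat.mod_eq_of_lt hbb
    have hbeq : (univ.filter (fun i => c i = c i₀ + 1)).card = bb := by
      rw [← hmod1, heq, hmod2]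
    have hms : c i₀ = s := by
      have h5 : d * c i₀ = d * s := by omega
      exact Nat.eq_of_mul_eq_mul_left hd h5
    rw [hms] at hall hbeq
    -- now c i ∈ {s, s+1} with exactly bb entries = s+1; same for ℓ; build σ
    have hℓcard : (univ.filter (fun i => ℓ i = s+1)).card = bb := by
      have := sum_binary ℓ s hℓ
      omega
    have hcard1 : Fintype.card {i // c i = s+1} = Fintype.card {i // ℓ i = s+1} := by
      rw [Fintype.card_subtype, Fintype.card_subtype, hbeq, hℓcard]
    have hcard2 : Fintype.card {i // ¬ c i = s+1} = Fintype.card {i // ¬ ℓ i = s+1} := by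
      rw [Fintype.card_subtype_compl, Fintype.card_subtype_compl, hcard1]
    set e₁ := Fintype.equivOfCardEq hcard1 with he₁
    set e₂ := Fintype.equivOfCardEq hcard2 with he₂
    set σ := Equiv.subtypeCongr e₁ e₂ with hσdef
    have hσ : ∀ i, (ℓ ∘ σ) i = c i := by
      intro i
      by_cases h : c i = s+1
      · have hσi : σ i = ↑(e₁ ⟨i, h⟩) := by simp [hσdef, Equiv.subtypeCongr, h]
        simp only [Function.comp_apply, hσi]
        rw [(e₁ ⟨i, h⟩).2, h]
      · have hσi : σ i = ↑(e₂ ⟨i, h⟩) := by simp [hσdef, Equiv.subtypeCongr, h]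
        have hci : c i = s := by rcases hall i with h2 | h2 <;> omega
        have hℓσ : ℓ (σ i) = s := by
          have h3 := (e₂ ⟨i, h⟩).2
          rcases hℓ (σ i) with h2 | h2
          · exact h2
          · rw [hσi] at h2 ⊢
            exact absurd h2 h3
        rw [Function.comp_apply, hℓσ, hci]
    have hfs : Fsym d x c = Fsym d x ℓ := by
      rw [show c = ℓ ∘ σ from (funext hσ).symm, Fsym_comp]
    rw [hfs]

lemma prod_fiber {d k : ℕ} (y : Fin d → ℝ) (f : Fin k → Fin d) :
    ∏ t, y (f t) = ∏ j, y j ^ (univ.filter (fun t => f t = j)).card := by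
  rw [← Finset.prod_fiberwise_of_maps_to (fun t (_ : t ∈ univ) => mem_univ (f t))
    (fun t => y (f t))]
  refine Finset.prod_congr rfl (fun j _ => ?_)
  rw [Finset.prod_congr rfl (fun t ht => by rw [(Finset.mem_filter.1 ht).2]),
    Finset.prod_const]

lemma sum_fiber_card {d k : ℕ} (f : Fin k → Fin d) :
    ∑ j, (univ.filter (fun t => f t = j)).card = k := by
  rw [← Finset.card_eq_sum_card_fiberwise (fun t (_ : t ∈ univ) => mem_univ (f t)),
    card_univ, Fintype.card_fin]

theorem stmt_6 (d k s b : ℕ) (hd : 2 ≤ d) (hk : 2 ≤ k) (hb : b ≤ d - 1)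
    (hks : k = d * s + b) (ℓ : Fin d → ℕ) (hℓsum : ∑ i, ℓ i = k)
    (hℓ : ∀ i, ℓ i = s ∨ ℓ i = s + 1)
    (x : Fin d → ℝ) (hx : ∀ i, 0 ≤ x i) (hxsum : ∑ i, x i = 1)
    (hxk : ∑ i, x i ^ k < 1) :
    (1 / (1 - ∑ i, x i ^ k)) * (1 / (Nat.factorial d : ℝ))
        * ∑ π : Equiv.Perm (Fin d), ∏ j, x j ^ ℓ (π j)
      ≤ 1 / ((d : ℝ) ^ k - d)
    ∧ (1 / (1 - ∑ _i : Fin d, (1 / (d : ℝ)) ^ k)) * (1 / (Nat.factorial d : ℝ))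
        * ∑ π : Equiv.Perm (Fin d), ∏ _j : Fin d, (1 / (d : ℝ)) ^ ℓ (π _j)
      = 1 / ((d : ℝ) ^ k - d) := by
  classical
  have hd0 : 0 < d := by omega
  have hbd : b < d := by omega
  have hdk : d < d ^ k := by
    calc d = d ^ 1 := (pow_one d).symm
    _ < d ^ k := Nat.pow_lt_pow_right (by omega) (by omega)
  have hdkR : (d : ℝ) < (d : ℝ) ^ k := by
    exact_mod_cast (by exact_mod_cast hdk : ((d : ℕ) : ℝ) < ((d ^ k : ℕ) : ℝ))
  have hDpos : (0:ℝ) < (d : ℝ) ^ k - d := by linarith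
  have hdR : (0:ℝ) < (d : ℝ) := by exact_mod_cast hd0
  have hfacR : (0:ℝ) < (Nat.factorial d : ℝ) := by
    exact_mod_cast Nat.factorial_pos d
  constructor
  · -- inequality
    set S := ∑ i, x i ^ k with hS
    have h1S : 0 < 1 - S := by linarith
    have hFLnn : 0 ≤ Fsym d x ℓ := Finset.sum_nonneg fun π _ =>
      Finset.prod_nonneg fun j _ => pow_nonneg (hx _) _
    have expand : (1:ℝ) = ∑ f : Fin k → Fin d, ∏ t, x (f t) := by
      calc (1:ℝ) = (∑ i, x i) ^ k := by rw [hxsum, one_pow]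
      _ = ∏ _t : Fin k, ∑ i, x i := by rw [Finset.prod_const, card_univ, Fintype.card_fin]
      _ = ∑ f ∈ Fintype.piFinset (fun _ : Fin k => (univ : Finset (Fin d))),
            ∏ t, x (f t) := Finset.prod_univ_sum _ _
      _ = ∑ f : Fin k → Fin d, ∏ t, x (f t) := by rw [Fintype.piFinset_univ]
    have hdfac : (Nat.factorial d : ℝ)
        = ∑ f : Fin k → Fin d, ∑ π : Equiv.Perm (Fin d), ∏ t, x (π (f t)) := by
      rw [Finset.sum_comm]
      have hπ : ∀ π : Equiv.Perm (Fin d),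
          ∑ f : Fin k → Fin d, ∏ t, x (π (f t)) = 1 := by
        intro π
        rw [expand]
        exact Fintype.sum_equiv (Equiv.arrowCongr (Equiv.refl (Fin k)) π) _ _
          (fun f => by simp [Equiv.arrowCongr])
      rw [Finset.sum_congr rfl (fun π _ => hπ π), Finset.sum_const, card_univ,
        Fintype.card_perm, Fintype.card_fin, nsmul_eq_mul, mul_one]
    have hperf : ∀ f : Fin k → Fin d,
        ∑ π : Equiv.Perm (Fin d), ∏ t, x (π (f t))
          = Fsym d x (fun j => (univ.filter (fun t => f t = j)).card) := by
      intro f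
      unfold Fsym
      exact Finset.sum_congr rfl (fun π _ => prod_fiber (fun j => x (π j)) f)
    have hmuir : ∀ f : Fin k → Fin d,
        Fsym d x ℓ ≤ ∑ π : Equiv.Perm (Fin d), ∏ t, x (π (f t)) := by
      intro f
      rw [hperf f]
      exact muirhead hd0 s b hbd x hx ℓ hℓ (by rw [hℓsum, hks])
        _ (by rw [sum_fiber_card f, hks])
    set A := (univ : Finset (Fin d)).image (fun i => (fun _ : Fin k => i)) with hA
    have hconst_inj : Function.Injective (fun (i : Fin d) => (fun _ : Fin k => i)) := by
      intro i j hij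
      exact congrFun hij ⟨0, by omega⟩
    have hcardA : A.card = d := by
      rw [hA, Finset.card_image_of_injective _ hconst_inj, card_univ, Fintype.card_fin]
    have hsplit : ∑ f : Fin k → Fin d, ∑ π : Equiv.Perm (Fin d), ∏ t, x (π (f t))
        = (∑ f ∈ univ \ A, ∑ π : Equiv.Perm (Fin d), ∏ t, x (π (f t)))
          + (∑ f ∈ A, ∑ π : Equiv.Perm (Fin d), ∏ t, x (π (f t))) :=
      (Finset.sum_sdiff (Finset.subset_univ A)).symm
    have hAval : (∑ f ∈ A, ∑ π : Equiv.Perm (Fin d), ∏ t, x (π (f t)))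
        = (Nat.factorial d : ℝ) * S := by
      rw [hA, Finset.sum_image (fun i _ j _ hij => hconst_inj hij)]
      have h2 : ∀ i : Fin d, ∑ π : Equiv.Perm (Fin d), ∏ _t : Fin k, x (π i)
          = ∑ π : Equiv.Perm (Fin d), x (π i) ^ k := by
        intro i
        exact Finset.sum_congr rfl (fun π _ => by
          rw [Finset.prod_const, card_univ, Fintype.card_fin])
      rw [Finset.sum_congr rfl (fun i _ => h2 i), Finset.sum_comm]
      have h3 : ∀ π : Equiv.Perm (Fin d), ∑ i, x (π i) ^ k = S :=
        fun π => Equiv.sum_comp π (fun i => x i ^ k)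
      rw [Finset.sum_congr rfl (fun π _ => h3 π), Finset.sum_const, card_univ,
        Fintype.card_perm, Fintype.card_fin, nsmul_eq_mul]
    have hcardB : (univ \ A).card = d ^ k - d := by
      rw [Finset.card_sdiff_of_subset (Finset.subset_univ A), card_univ, hcardA, Fintype.card_fun,
        Fintype.card_fin, Fintype.card_fin]
    have hcast : ((d ^ k - d : ℕ) : ℝ) = (d : ℝ) ^ k - d := by
      rw [Nat.cast_sub (le_of_lt hdk)]
      push_cast
      ring
    have hBge : ((d : ℝ) ^ k - d) * Fsym d x ℓ
        ≤ ∑ f ∈ univ \ A, ∑ π : Equiv.Perm (Fin d), ∏ t, x (π (f t)) := by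
      calc ((d : ℝ) ^ k - d) * Fsym d x ℓ = (univ \ A).card • Fsym d x ℓ := by
            rw [hcardB, nsmul_eq_mul, hcast]
      _ ≤ _ := Finset.card_nsmul_le_sum _ _ _ (fun f _ => hmuir f)
    have key : (Nat.factorial d : ℝ) * S + ((d : ℝ) ^ k - d) * Fsym d x ℓ
        ≤ (Nat.factorial d : ℝ) := by
      have h8 := hdfac
      rw [hsplit, hAval] at h8
      linarith [hBge]
    rw [← Fsym_eq]
    rw [show (1 / (1 - S)) * (1 / (Nat.factorial d : ℝ)) * Fsym d x ℓ
        = Fsym d x ℓ / ((1 - S) * (Nat.factorial d : ℝ)) by field_simp]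
    rw [div_le_div_iff₀ (by positivity) hDpos]
    nlinarith [key]
  · -- equality
    have hsum1 : ∑ _i : Fin d, (1 / (d : ℝ)) ^ k = d * (1 / (d : ℝ)) ^ k := by
      rw [Finset.sum_const, card_univ, Fintype.card_fin, nsmul_eq_mul]
    have hprod : ∀ π : Equiv.Perm (Fin d),
        ∏ _j : Fin d, (1 / (d : ℝ)) ^ ℓ (π _j) = (1 / (d : ℝ)) ^ k := by
      intro π
      rw [Finset.prod_pow_eq_pow_sum, Equiv.sum_comp π ℓ, hℓsum]
    have hsum2 : ∑ π : Equiv.Perm (Fin d), ∏ _j : Fin d, (1 / (d : ℝ)) ^ ℓ (π _j)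
        = (Nat.factorial d : ℝ) * (1 / (d : ℝ)) ^ k := by
      rw [Finset.sum_congr rfl (fun π _ => hprod π), Finset.sum_const, card_univ,
        Fintype.card_perm, Fintype.card_fin, nsmul_eq_mul]
    rw [hsum1, hsum2]
    have hdk0 : ((d : ℝ)) ^ k ≠ 0 := by positivity
    have hdne : (d : ℝ) ≠ 0 := ne_of_gt hdR
    have hfacne : (Nat.factorial d : ℝ) ≠ 0 := ne_of_gt hfacR
    have hDne : (d : ℝ) ^ k - d ≠ 0 := ne_of_gt hDpos
    have h7 : 1 - (d : ℝ) * (1 / (d : ℝ)) ^ k = ((d : ℝ) ^ k - d) / (d : ℝ) ^ k := by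
      field_simp
      rw [sub_mul, one_mul, mul_assoc, ← mul_pow, one_div_mul_cancel hdne, one_pow, mul_one]
    rw [h7, one_div_div]
    field_simp
    ring
    rw [← mul_pow, mul_inv_cancel₀ hdne, one_pow]
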